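/- For every integer ℓ ≥ 1 and every real s with 0 ≤ s ≤ ℓ there exists a constant C_ℓ > 0 such that for every a in the open unit disk of ℝ² ≅ ℂ and every integer n ≥ 1, the Fourier coefficients ĝ_a(k) of the 2π-periodic function g_a(θ) = ln|e^{iθ} − a| satisfy ∑_{|k| > n} (1 + |k|²)^s |ĝ_a(k)|² ≤ C_ℓ · n^{2(s − ℓ)} · (1 − |a|)^{1 − 2ℓ}. -/

import Mathlib

open MeasureTheory

noncomputable section

/-- The `k`-th Fourier coefficient `ĝ(k) = (1/2π)∫₀^{2π} e^{-ikθ} g(θ) dθ`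
of a `2π`-periodic function `g : ℝ → ℝ` (viewed with values in `ℂ`). -/
def fourierCoefficient (g : ℝ → ℝ) (k : ℤ) : ℂ :=
  (1 / (2 * Real.pi) : ℝ) *
    ∫ θ in (0:ℝ)..(2 * Real.pi), Complex.exp (-(k : ℂ) * θ * Complex.I) * (g θ : ℂ)

private lemma orth (p : ℤ) :
    (∫ θ in (0:ℝ)..(2 * Real.pi), Complex.exp ((p:ℂ) * θ * Complex.I)) =
      if p = 0 then (2 * Real.pi : ℂ) else 0 := by
  have hrw : ∀ θ : ℝ, (p:ℂ) * θ * Complex.I = ((p:ℂ) * Complex.I) * θ := fun θ => by ring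
  simp_rw [hrw]
  rcases eq_or_ne p 0 with rfl | hp
  · simp
  · have hc : (p:ℂ) * Complex.I ≠ 0 :=
      mul_ne_zero (by exact_mod_cast hp) Complex.I_ne_zero
    rw [if_neg hp, integral_exp_mul_complex hc]
    have h1 : (p:ℂ) * Complex.I * (2 * Real.pi : ℝ) = (p:ℤ) * (2 * (Real.pi:ℂ) * Complex.I) := by
      push_cast; ring
    rw [h1, Complex.exp_int_mul_two_pi_mul_I]
    simp

-- the family of functions
private def F (a : ℂ) (k : ℤ) (m : ℕ) (θ : ℝ) : ℂ :=
  Complex.exp (-(k : ℂ) * θ * Complex.I) *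
    (-(((a * Complex.exp (-(θ * Complex.I)))^m / m
        + ((starRingEnd ℂ) a * Complex.exp (θ * Complex.I))^m / m) / 2))

-- pointwise HasSum
private lemma hasSum_F (a : ℂ) (ha : ‖a‖ < 1) (k : ℤ) (θ : ℝ) :
    HasSum (fun m : ℕ => F a k m θ)
      (Complex.exp (-(k : ℂ) * θ * Complex.I) *
        ((Real.log (‖Complex.exp (θ * Complex.I) - a‖) : ℝ) : ℂ)) := by
  set w : ℂ := a * Complex.exp (-(θ * Complex.I)) with hw
  have hnw : ‖w‖ < 1 := by
    have h0 : ‖Complex.exp (-((θ:ℂ) * Complex.I))‖ = 1 := by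
      rw [show -((θ:ℂ) * Complex.I) = ((-θ : ℝ) : ℂ) * Complex.I by push_cast; ring,
        Complex.norm_exp_ofReal_mul_I]
    rw [hw, norm_mul, h0, mul_one]; exact ha
  have h1 : HasSum (fun m : ℕ => w ^ m / m) (-Complex.log (1 - w)) :=
    Complex.hasSum_taylorSeries_neg_log hnw
  have h2 : HasSum (fun m : ℕ => (starRingEnd ℂ) (w ^ m / m))
      ((starRingEnd ℂ) (-Complex.log (1 - w))) := by
    exact h1.mapL (Complex.conjCLE.toContinuousLinearMap)
  have h3 := ((h1.add h2).div_const 2).neg.mul_left (Complex.exp (-(k : ℂ) * θ * Complex.I))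
  convert h3 using 2 with m
  · rfl
  · -- F a k m θ equals the term
    rw [F]
    congr 2
    have hconjw : (starRingEnd ℂ) w = (starRingEnd ℂ) a * Complex.exp (θ * Complex.I) := by
      rw [hw, map_mul, ← Complex.exp_conj]
      congr 1
      simp [Complex.conj_ofReal]
    rw [map_div₀, map_pow, hconjw]
    simp
    rfl
  · -- value
    have hne : Complex.exp (θ * Complex.I) - a ≠ 0 := by
      intro h
      have : a = Complex.exp (θ * Complex.I) := by linear_combination -h
      rw [this] at ha
      rw [show (θ:ℂ) * Complex.I = ((θ:ℝ):ℂ) * Complex.I from rfl,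
        Complex.norm_exp_ofReal_mul_I] at ha
      exact lt_irrefl _ ha
    have habs : ‖Complex.exp (θ * Complex.I) - a‖ = ‖1 - w‖ := by
      have : Complex.exp (θ * Complex.I) - a = Complex.exp (θ * Complex.I) * (1 - w) := by
        rw [hw]; rw [mul_sub, mul_one]
        congr 1
        rw [show a * Complex.exp (-(↑θ * Complex.I)) = Complex.exp (-(↑θ * Complex.I)) * a from
          mul_comm _ _, ← mul_assoc, ← Complex.exp_add]
        simp
      rw [this, norm_mul]
      rw [show (θ:ℂ) * Complex.I = ((θ:ℝ):ℂ) * Complex.I from rfl,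
        Complex.norm_exp_ofReal_mul_I, one_mul]
    rw [habs]
    have hlre : Real.log (‖1 - w‖) = (Complex.log (1 - w)).re := by
      rw [Complex.log_re]
    rw [hlre]
    have : ((Complex.log (1 - w)).re : ℂ)
        = (Complex.log (1 - w) + (starRingEnd ℂ) (Complex.log (1 - w))) / 2 := by
      rw [Complex.add_conj]; push_cast; ring
    rw [this, map_neg]
    ring

private lemma F_integral (a : ℂ) (k : ℤ) (hk : k ≠ 0) (m : ℕ) :
    (∫ θ in (0:ℝ)..(2 * Real.pi), F a k m θ)
      = if m = k.natAbs then
          (-(2 * Real.pi) / (2 * (k.natAbs : ℂ))) *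
            (if 0 < k then ((starRingEnd ℂ) a) ^ k.natAbs else a ^ k.natAbs)
        else 0 := by
  have hK : 1 ≤ k.natAbs := Int.natAbs_pos.mpr hk
  rcases Nat.eq_zero_or_pos m with rfl | hm
  · have : ∀ θ : ℝ, F a k 0 θ = 0 := by
      intro θ; rw [F]; simp
    simp only [this, intervalIntegral.integral_zero]
    rw [if_neg (by omega)]
  · -- rewrite F as sum of two exponentials
    have hrw : ∀ θ : ℝ, F a k m θ =
        (-(a ^ m / (2 * m))) * Complex.exp (((-(k + m) : ℤ) : ℂ) * θ * Complex.I)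
          + (-(((starRingEnd ℂ) a) ^ m / (2 * m)))
              * Complex.exp ((((m : ℤ) - k : ℤ) : ℂ) * θ * Complex.I) := by
      intro θ
      rw [F, mul_pow, mul_pow, ← Complex.exp_nat_mul, ← Complex.exp_nat_mul]
      have e1 : ((-(k + m) : ℤ) : ℂ) * θ * Complex.I
          = -(k:ℂ) * θ * Complex.I + (m:ℕ) * -((θ:ℂ) * Complex.I) := by push_cast; ring
      have e2 : (((m : ℤ) - k : ℤ) : ℂ) * θ * Complex.I
          = -(k:ℂ) * θ * Complex.I + (m:ℕ) * ((θ:ℂ) * Complex.I) := by push_cast; ring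
      rw [e1, e2, Complex.exp_add, Complex.exp_add]
      ring
    have hi1 : IntervalIntegrable
        (fun θ : ℝ => (-(a ^ m / (2 * m))) * Complex.exp (((-(k + m) : ℤ) : ℂ) * θ * Complex.I))
        volume 0 (2 * Real.pi) := by
      apply Continuous.intervalIntegrable; fun_prop
    have hi2 : IntervalIntegrable
        (fun θ : ℝ => (-(((starRingEnd ℂ) a) ^ m / (2 * m)))
          * Complex.exp ((((m : ℤ) - k : ℤ) : ℂ) * θ * Complex.I))
        volume 0 (2 * Real.pi) := by
      apply Continuous.intervalIntegrable; fun_prop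
    rw [intervalIntegral.integral_congr (g := _) (fun θ _ => hrw θ),
      intervalIntegral.integral_add hi1 hi2,
      intervalIntegral.integral_const_mul, intervalIntegral.integral_const_mul,
      orth, orth]
    by_cases hmk : m = k.natAbs
    · subst hmk
      rcases lt_or_gt_of_ne hk with hneg | hpos
      · have h1 : -(k + (k.natAbs:ℤ)) = 0 := by omega
        have h2 : (k.natAbs : ℤ) - k ≠ 0 := by omega
        rw [if_pos h1, if_neg h2, if_pos rfl, if_neg (by omega : ¬ 0 < k)]
        ring
      · have h1 : -(k + (k.natAbs:ℤ)) ≠ 0 := by omega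
        have h2 : (k.natAbs : ℤ) - k = 0 := by omega
        rw [if_neg h1, if_pos h2, if_pos rfl, if_pos hpos]
        ring
    · have h1 : -(k + (m:ℤ)) ≠ 0 := by omega
      have h2 : (m : ℤ) - k ≠ 0 := by omega
      rw [if_neg h1, if_neg h2, if_neg hmk]
      ring

private lemma norm_exp_neg_k (k : ℤ) (θ : ℝ) : ‖Complex.exp (-(k:ℂ) * θ * Complex.I)‖ = 1 := by
  rw [show -(k:ℂ) * θ * Complex.I = ((-(k:ℝ) * θ : ℝ) : ℂ) * Complex.I by push_cast; ring,
    Complex.norm_exp_ofReal_mul_I]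

private lemma coeff_norm (a : ℂ) (ha : ‖a‖ < 1) (k : ℤ) (hk : k ≠ 0) :
    ‖fourierCoefficient
        (fun θ : ℝ => Real.log (‖Complex.exp (θ * Complex.I) - a‖)) k‖
      = ‖a‖ ^ k.natAbs / (2 * k.natAbs) := by
  have hπ : (0:ℝ) < 2 * Real.pi := by positivity
  set r := ‖a‖ with hr
  have hr0 : 0 ≤ r := norm_nonneg a
  set K := k.natAbs with hKdef
  have hK : 1 ≤ K := Int.natAbs_pos.mpr hk
  set μ : Measure ℝ := volume.restrict (Set.Ioc (0:ℝ) (2 * Real.pi)) with hμ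
  have hcont : ∀ m : ℕ, Continuous (F a k m) := by
    intro m
    unfold F
    fun_prop
  have hsum : HasSum (fun m : ℕ => ∫ θ, F a k m θ ∂μ)
      (∫ θ, Complex.exp (-(k : ℂ) * θ * Complex.I) *
        ((Real.log (‖Complex.exp (θ * Complex.I) - a‖) : ℝ) : ℂ) ∂μ) := by
    apply hasSum_integral_of_dominated_convergence (bound := fun m _ => r ^ m)
    · exact fun m => (hcont m).aestronglyMeasurable
    · intro m
      refine Filter.Eventually.of_forall (fun θ => ?_)
      rcases Nat.eq_zero_or_pos m with rfl | hm
    -- m = 0 : F = 0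
      · have : F a k 0 θ = 0 := by unfold F; simp
        rw [this]; simp
      · unfold F
        rw [norm_mul, norm_exp_neg_k, one_mul, norm_neg]
        have h1 : ‖(a * Complex.exp (-((θ:ℂ) * Complex.I))) ^ m / (m:ℂ)‖ ≤ r ^ m := by
          rw [norm_div, norm_pow, norm_mul]
          have he : ‖Complex.exp (-((θ:ℂ) * Complex.I))‖ = 1 := by
            rw [show -((θ:ℂ) * Complex.I) = ((-θ : ℝ) : ℂ) * Complex.I by push_cast; ring,
              Complex.norm_exp_ofReal_mul_I]
          rw [he, mul_one, ← hr]
          have : ‖(m:ℂ)‖ = (m:ℝ) := by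
            rw [Complex.norm_natCast]
          rw [this]
          apply div_le_self (by positivity)
          exact_mod_cast hm
        have h2 : ‖((starRingEnd ℂ) a * Complex.exp ((θ:ℂ) * Complex.I)) ^ m / (m:ℂ)‖
            ≤ r ^ m := by
          rw [norm_div, norm_pow, norm_mul]
          have he : ‖Complex.exp ((θ:ℂ) * Complex.I)‖ = 1 := by
            rw [Complex.norm_exp_ofReal_mul_I]
          rw [he, mul_one, Complex.norm_conj, ← hr]
          have : ‖(m:ℂ)‖ = (m:ℝ) := by
            rw [Complex.norm_natCast]
          rw [this]
          apply div_le_self (by positivity)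
          exact_mod_cast hm
        calc ‖((a * Complex.exp (-((θ:ℂ) * Complex.I))) ^ m / (m:ℂ)
              + ((starRingEnd ℂ) a * Complex.exp ((θ:ℂ) * Complex.I)) ^ m / (m:ℂ)) / 2‖
            ≤ (‖(a * Complex.exp (-((θ:ℂ) * Complex.I))) ^ m / (m:ℂ)‖
              + ‖((starRingEnd ℂ) a * Complex.exp ((θ:ℂ) * Complex.I)) ^ m / (m:ℂ)‖) / 2 := by
              rw [norm_div]
              have : ‖(2:ℂ)‖ = 2 := by norm_num
              rw [this]
              gcongr
              exact norm_add_le _ _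
          _ ≤ (r ^ m + r ^ m) / 2 := by gcongr
          _ = r ^ m := by ring
    · exact Filter.Eventually.of_forall (fun _ => summable_geometric_of_lt_one hr0 ha)
    · exact integrableOn_const measure_Ioc_lt_top.ne
    · exact Filter.Eventually.of_forall (fun θ => hasSum_F a ha k θ)
  -- convert to interval integrals
  have hconv : ∀ h : ℝ → ℂ, (∫ θ, h θ ∂μ) = ∫ θ in (0:ℝ)..(2 * Real.pi), h θ := by
    intro h
    rw [intervalIntegral.integral_of_le hπ.le]
  simp only [hμ] at hsum
  rw [hconv] at hsum
  have heq : (fun m : ℕ => ∫ θ, F a k m θ ∂μ)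
      = fun m : ℕ => if m = K then
          (-(2 * Real.pi) / (2 * (K : ℂ))) *
            (if 0 < k then ((starRingEnd ℂ) a) ^ K else a ^ K)
        else 0 := by
    funext m
    rw [hμ, hconv, F_integral a k hk m]
  rw [heq] at hsum
  set v : ℂ := (-(2 * Real.pi) / (2 * (K : ℂ))) *
      (if 0 < k then ((starRingEnd ℂ) a) ^ K else a ^ K) with hv
  have hsum2 : HasSum (fun m : ℕ => if m = K then v else 0) v := hasSum_ite_eq K v
  have hval : (∫ θ in (0:ℝ)..(2 * Real.pi),
      Complex.exp (-(k : ℂ) * θ * Complex.I) *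
        ((Real.log (‖Complex.exp (θ * Complex.I) - a‖) : ℝ) : ℂ)) = v :=
    (hsum.unique hsum2)
  rw [fourierCoefficient, hval, norm_mul, hv]
  have h2K : ‖(2 * (K:ℂ))‖ = 2 * K := by
    rw [norm_mul, Complex.norm_natCast]
    norm_num
  have hb : ‖(if 0 < k then ((starRingEnd ℂ) a) ^ K else a ^ K)‖ = r ^ K := by
    split <;> rw [norm_pow] <;> simp [Complex.norm_conj, hr]
  rw [norm_mul, norm_div, hb, h2K, norm_neg]
  have h2π : ‖((1 / (2 * Real.pi) : ℝ) : ℂ)‖ = 1 / (2 * Real.pi) := by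
    rw [Complex.norm_real, Real.norm_eq_abs, abs_of_pos (by positivity)]
  have h2π' : ‖(2 * (Real.pi:ℂ))‖ = 2 * Real.pi := by
    rw [norm_mul, Complex.norm_real, Real.norm_eq_abs, abs_of_pos Real.pi_pos]
    norm_num
  rw [h2π, h2π']
  have hKpos : (0:ℝ) < K := by exact_mod_cast hK
  field_simp

set_option maxHeartbeats 1000000 in
theorem stmt16 (ℓ : ℕ) (hℓ : 1 ≤ ℓ) (s : ℝ) (hs0 : 0 ≤ s) (hsℓ : s ≤ ℓ) :
    ∃ C > 0, ∀ a : ℂ, ‖a‖ < 1 → ∀ n : ℕ, 1 ≤ n →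
      ∑' k : ℤ,
          (if n < k.natAbs then
            (1 + |(k : ℝ)| ^ 2) ^ s *
              ‖fourierCoefficient
                  (fun θ : ℝ => Real.log (‖Complex.exp (θ * Complex.I) - a‖)) k‖ ^ 2
          else 0)
        ≤ C * (n : ℝ) ^ (2 * (s - ℓ)) * (1 - ‖a‖) ^ (1 - 2 * (ℓ : ℝ)) := by
  set m : ℕ := 2 * (ℓ - 1) with hm
  have hmcast : (m : ℝ) = 2 * (ℓ : ℝ) - 2 := by
    have h2 : m + 2 = 2 * ℓ := by omega
    have := congrArg (fun x : ℕ => (x : ℝ)) h2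
    push_cast at this
    linarith
  refine ⟨2 * 2 ^ s * (Nat.factorial m : ℝ), by positivity, ?_⟩
  intro a ha n hn
  set r := ‖a‖ with hr
  have hr0 : 0 ≤ r := norm_nonneg a
  set d := 1 - r with hd
  have hd0 : 0 < d := by rw [hd]; linarith
  have hd1 : d ≤ 1 := by rw [hd]; linarith
  set q := Real.exp (-d) with hq
  have hq0 : 0 < q := Real.exp_pos _
  have hq1 : q < 1 := Real.exp_lt_one_iff.mpr (by linarith)
  have hrq : r ≤ q := by
    have := Real.add_one_le_exp (-d)
    rw [hq]; rw [hd] at this ⊢; linarith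
  set N := (n : ℝ) ^ (2 * (s - (ℓ:ℝ))) with hN
  have hN0 : 0 ≤ N := Real.rpow_nonneg (Nat.cast_nonneg n) _
  set B := 2 ^ s * N * (Nat.factorial m : ℝ) / (4 * d ^ m) with hB
  have hB0 : 0 ≤ B := by positivity
  have key : ∀ k : ℤ,
      (if n < k.natAbs then
        (1 + |(k : ℝ)| ^ 2) ^ s *
          ‖fourierCoefficient
              (fun θ : ℝ => Real.log (‖Complex.exp (θ * Complex.I) - a‖)) k‖ ^ 2
      else 0) ≤ B * q ^ k.natAbs := by
    intro k
    split
    case isFalse => positivity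
    case isTrue h =>
      have hk : k ≠ 0 := by
        intro h0
        rw [h0] at h
        simp at h
      set j := k.natAbs with hj
      have hj1 : 1 ≤ j := by omega
      have hjn : n < j := h
      have hjR : (1:ℝ) ≤ (j:ℝ) := by exact_mod_cast hj1
      have hjpos : (0:ℝ) < (j:ℝ) := by linarith
      rw [coeff_norm a ha k hk]
      have hjcast : |(k:ℝ)| = (j:ℝ) := by
        rw [← Int.cast_abs, Int.abs_eq_natAbs]
        exact_mod_cast rfl
      rw [hjcast, ← hr, ← hj]
      -- step 1
      have e1 : (1 + (j:ℝ)^2) ^ s ≤ 2 ^ s * (j:ℝ) ^ (2*(s - (ℓ:ℝ))) * (j:ℝ) ^ (m + 2) := by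
        have a1 : (1 + (j:ℝ)^2) ^ s ≤ (2 * (j:ℝ)^2) ^ s := by
          apply Real.rpow_le_rpow (by positivity) (by nlinarith) hs0
        have a2 : (2 * (j:ℝ)^2) ^ s = 2 ^ s * ((j:ℝ)^2) ^ s :=
          Real.mul_rpow (by norm_num) (by positivity)
        have a3 : ((j:ℝ)^2) ^ s = (j:ℝ) ^ ((2:ℝ) * s) := by
          rw [← Real.rpow_natCast (j:ℝ) 2, ← Real.rpow_mul hjpos.le]
          norm_num
        have a4 : (j:ℝ) ^ ((2:ℝ) * s)
            = (j:ℝ) ^ (2*(s - (ℓ:ℝ))) * (j:ℝ) ^ (2 * (ℓ:ℝ)) := by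
          rw [← Real.rpow_add hjpos]
          ring_nf
        have a5 : (j:ℝ) ^ (2 * (ℓ:ℝ)) = (j:ℝ) ^ (m + 2) := by
          rw [show 2 * (ℓ:ℝ) = ((m + 2 : ℕ) : ℝ) by push_cast; rw [hmcast]; ring,
            Real.rpow_natCast]
        calc (1 + (j:ℝ)^2) ^ s ≤ (2 * (j:ℝ)^2) ^ s := a1
          _ = 2 ^ s * (j:ℝ) ^ (2*(s - (ℓ:ℝ))) * (j:ℝ) ^ (m + 2) := by
              rw [a2, a3, a4, a5]; ring
      -- step 2
      have b2 : q ^ j ≤ (Nat.factorial m : ℝ) / ((j:ℝ)^m * d^m) := by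
        have hE : (0:ℝ) < Real.exp ((j:ℝ) * d) := Real.exp_pos _
        have h1' : ((j:ℝ) * d) ^ m ≤ (Nat.factorial m : ℝ) * Real.exp ((j:ℝ)*d) := by
          have h1 := Real.pow_div_factorial_le_exp (x := (j:ℝ)*d) (by positivity) m
          rw [div_le_iff₀ (by positivity : (0:ℝ) < (Nat.factorial m : ℝ))] at h1
          linarith
        have h2 : q ^ j = (Real.exp ((j:ℝ)*d))⁻¹ := by
          rw [hq, ← Real.exp_nat_mul, ← Real.exp_neg]
          congr 1
          ring
        rw [h2, le_div_iff₀ (by positivity : (0:ℝ) < (j:ℝ)^m * d^m)]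
        calc (Real.exp ((j:ℝ)*d))⁻¹ * ((j:ℝ)^m * d^m)
            = (Real.exp ((j:ℝ)*d))⁻¹ * ((j:ℝ) * d)^m := by rw [mul_pow]
          _ ≤ (Real.exp ((j:ℝ)*d))⁻¹ * ((Nat.factorial m:ℝ) * Real.exp ((j:ℝ)*d)) :=
              mul_le_mul_of_nonneg_left h1' (inv_nonneg.mpr hE.le)
          _ = (Nat.factorial m : ℝ) := by field_simp
      have e2 : (r ^ j / (2 * (j:ℝ))) ^ 2
          ≤ q ^ j * ((Nat.factorial m : ℝ) / ((j:ℝ)^m * d^m)) / (4 * (j:ℝ)^2) := by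
        have b1 : r ^ j ≤ q ^ j := pow_le_pow_left₀ hr0 hrq j
        calc (r ^ j / (2 * (j:ℝ))) ^ 2 = (r^j)^2 / (4 * (j:ℝ)^2) := by
              rw [div_pow]; ring_nf
          _ ≤ (q^j * ((Nat.factorial m : ℝ) / ((j:ℝ)^m * d^m))) / (4 * (j:ℝ)^2) := by
              gcongr
              calc (r^j)^2 ≤ (q^j)^2 := by gcongr
                _ = q^j * q^j := by ring
                _ ≤ q^j * ((Nat.factorial m : ℝ) / ((j:ℝ)^m * d^m)) := by
                    gcongr
      -- combine
      have e3 : (1 + (j:ℝ)^2) ^ s * (r ^ j / (2 * (j:ℝ))) ^ 2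
          ≤ (2 ^ s * (j:ℝ) ^ (2*(s - (ℓ:ℝ))) * (j:ℝ) ^ (m + 2))
            * (q ^ j * ((Nat.factorial m : ℝ) / ((j:ℝ)^m * d^m)) / (4 * (j:ℝ)^2)) :=
        mul_le_mul e1 e2 (by positivity) (by positivity)
      have e4 : (2 ^ s * (j:ℝ) ^ (2*(s - (ℓ:ℝ))) * (j:ℝ) ^ (m + 2))
            * (q ^ j * ((Nat.factorial m : ℝ) / ((j:ℝ)^m * d^m)) / (4 * (j:ℝ)^2))
          = (2 ^ s * (j:ℝ) ^ (2*(s - (ℓ:ℝ))) * (Nat.factorial m : ℝ) / (4 * d ^ m)) * q ^ j := by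
        field_simp
        ring
      have e5 : (j:ℝ) ^ (2*(s - (ℓ:ℝ))) ≤ N := by
        rw [hN]
        apply Real.rpow_le_rpow_of_nonpos
          (by exact_mod_cast Nat.lt_of_lt_of_le Nat.zero_lt_one hn)
          (by exact_mod_cast hjn.le)
        nlinarith
      calc (1 + (j:ℝ)^2) ^ s * (r ^ j / (2 * (j:ℝ))) ^ 2
          ≤ (2 ^ s * (j:ℝ) ^ (2*(s - (ℓ:ℝ))) * (Nat.factorial m : ℝ) / (4 * d ^ m)) * q ^ j := by
            rw [← e4]; exact e3
        _ ≤ B * q ^ j := by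
            rw [hB]
            gcongr
  -- summation
  have hgeom : HasSum (fun i : ℕ => q ^ i) (1 - q)⁻¹ :=
    hasSum_geometric_of_lt_one hq0.le hq1
  have hMsum : HasSum (fun k : ℤ => B * q ^ k.natAbs)
      (B * (1 - q)⁻¹ + B * q * (1 - q)⁻¹) := by
    apply HasSum.of_nat_of_neg_add_one
    · have h1 : (fun i : ℕ => B * q ^ ((i:ℤ).natAbs)) = fun i : ℕ => B * q ^ i := by
        funext i; simp
      rw [h1]
      exact hgeom.mul_left B
    · have h1 : (fun i : ℕ => B * q ^ ((-((i:ℤ) + 1)).natAbs)) = fun i : ℕ => (B * q) * q ^ i := by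
        funext i
        have h2 : (-((i:ℤ) + 1)).natAbs = i + 1 := by omega
        rw [h2, pow_succ]; ring
      rw [h1]
      exact hgeom.mul_left (B * q)
  have horig : Summable (fun k : ℤ =>
      (if n < k.natAbs then
        (1 + |(k : ℝ)| ^ 2) ^ s *
          ‖fourierCoefficient
              (fun θ : ℝ => Real.log (‖Complex.exp (θ * Complex.I) - a‖)) k‖ ^ 2
      else 0)) := by
    apply Summable.of_nonneg_of_le _ key hMsum.summable
    intro k
    split
    · positivity
    · exact le_refl 0
  have hle := Summable.tsum_le_tsum key horig hMsum.summable
  rw [hMsum.tsum_eq] at hle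
  refine hle.trans ?_
  -- final numeric bound
  have h1q : d / 3 ≤ 1 - q := by
    have hq3 : (1:ℝ)/3 ≤ q := by
      have hqe : q = (Real.exp d)⁻¹ := by rw [hq, Real.exp_neg]
      have hd3 : Real.exp d ≤ 3 := by
        calc Real.exp d ≤ Real.exp 1 := Real.exp_le_exp.mpr hd1
          _ ≤ 3 := by linarith [Real.exp_one_lt_d9]
      have := inv_anti₀ (Real.exp_pos d) hd3
      rw [hqe]
      calc (1:ℝ)/3 = 3⁻¹ := by norm_num
        _ ≤ (Real.exp d)⁻¹ := this
    have hdq : d * q ≤ 1 - q := by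
      have h4 := Real.add_one_le_exp d
      have h3 : Real.exp d * q = 1 := by
        rw [hq, ← Real.exp_add]; simp
      nlinarith
    have h5 := mul_le_mul_of_nonneg_left hq3 hd0.le
    calc d / 3 = d * (1/3) := by ring
      _ ≤ d * q := h5
      _ ≤ 1 - q := hdq
  have hinv : (1 - q)⁻¹ ≤ 3 / d := by
    have h1q0 : (0:ℝ) < 1 - q := by linarith
    have := inv_anti₀ (by positivity : (0:ℝ) < d/3) h1q
    rwa [inv_div] at this
  have hdpow : d ^ ((1:ℝ) - 2 * (ℓ:ℝ)) = (d ^ (m+1))⁻¹ := by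
    rw [show (1:ℝ) - 2*(ℓ:ℝ) = -(((m+1 : ℕ)):ℝ) by push_cast; rw [hmcast]; ring,
      Real.rpow_neg hd0.le, Real.rpow_natCast]
  rw [hdpow]
  calc B * (1 - q)⁻¹ + B * q * (1 - q)⁻¹
      ≤ B * (3/d) + B * 1 * (3/d) := by
        have hiq : (0:ℝ) ≤ (1 - q)⁻¹ := inv_nonneg.mpr (by linarith)
        gcongr <;> first | exact hinv | exact hq1.le | exact hiq
    _ = 6 * B / d := by ring
    _ = (3/2) * (2 ^ s * N * (Nat.factorial m : ℝ)) / d ^ (m+1) := by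
        rw [hB]; field_simp; ring
    _ ≤ 2 * (2 ^ s * N * (Nat.factorial m : ℝ)) / d ^ (m+1) := by
        gcongr
        norm_num
    _ = 2 * 2 ^ s * (Nat.factorial m : ℝ) * N * (d ^ (m+1))⁻¹ := by ring
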